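/- arXiv:1407.1701 — 4 statements merged into one kernel-verified Lean document; each statement's English description precedes it below -/
import Mathlib

section
/- Let m ≥ 2 and consider the sequence φ = (0, 0, 1, 2, ..., m-2) of elements of Z_m. A sequence α = (α_1, ..., α_k) of nonzero elements of Z_m is φ-good (i.e. there exist strictly upper-triangular matrix units r_1, ..., r_k in UT_m with the elementary grading induced by φ such that r_1 ⋯ r_k ≠ 0 and deg(r_i) = α_i) if and only if, writing μ_j for the number of indices i with α_i = j (for j = 1, ..., m-1), one has ∑_{j=1}^{m-1} μ_j · j ≤ m - 2. -/
/-- Product of a chain of matrix units. -/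
lemma chainProdAux (F : Type) [Field F] (m : ℕ) :
    ∀ (k : ℕ) (c : ℕ → Fin m),
      (List.ofFn (fun i : Fin (k+1) =>
        Matrix.single (c i) (c ((i : ℕ)+1)) (1 : F))).prod
        = Matrix.single (c 0) (c (k+1)) 1 := by
  intro k
  induction k with
  | zero =>
      intro c
      simp
  | succ n ih =>
      intro c
      rw [List.ofFn_succ, List.prod_cons]
      have htail : (List.ofFn (fun i : Fin (n+1) =>
          Matrix.single (c ((i.succ : ℕ))) (c ((i.succ : ℕ)+1)) (1 : F))).prod
          = Matrix.single (c 1) (c (n+2)) 1 := by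
        have := ih (fun t => c (t+1))
        simpa using this
      rw [htail]
      simp [Matrix.single_mul_single_same]

/-- Nonzero product of matrix units forces chaining. -/
lemma prodChainAux (F : Type) [Field F] (m : ℕ) :
    ∀ (k : ℕ) (a b : Fin k → Fin m),
      (List.ofFn (fun i => Matrix.single (a i) (b i) (1 : F))).prod ≠ 0 →
      ∀ (i : ℕ) (h1 : i < k) (h2 : i + 1 < k), b ⟨i, h1⟩ = a ⟨i+1, h2⟩ := by
  intro k
  induction k with
  | zero => intro a b _ i h1 _; omega
  | succ n ih =>
      intro a b hprod i h1 h2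
      rw [List.ofFn_succ, List.prod_cons] at hprod
      match i, h1, h2 with
      | 0, h1, h2 =>
          match n, a, b, hprod, h2 with
          | n'+1, a, b, hprod, h2 =>
            rw [List.ofFn_succ, List.prod_cons] at hprod
            by_contra hne
            apply hprod
            rw [← mul_assoc]
            have h0 : Matrix.single (a 0) (b 0) (1:F) *
                Matrix.single (a (0 : Fin (n'+1)).succ) (b (0 : Fin (n'+1)).succ) (1:F) = 0 := by
              apply Matrix.single_mul_single_of_ne
              exact fun h => hne (by simpa using h)
            rw [h0, zero_mul]
      | i'+1, h1, h2 =>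
          have htail : (List.ofFn (fun j : Fin n =>
              Matrix.single (a j.succ) (b j.succ) (1 : F))).prod ≠ 0 := by
            intro h0
            rw [h0, mul_zero] at hprod
            exact hprod rfl
          have := ih (fun j => a j.succ) (fun j => b j.succ) htail i' (by omega) (by omega)
          exact this


/-- Characterization of good sequences for the elementary `ℤ_m`-grading on `UT_m(F)`
induced by `φ = (0,0,1,…,m-2)`: a sequence `α` of nonzero elements of `ℤ_m` is good
(realizable by strictly upper-triangular matrix units with nonzero product and the
prescribed degrees) iff `∑_{j=1}^{m-1} μ_j · j ≤ m-2`, where `μ_j` is the number of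
entries of `α` equal to `j`. -/
theorem stmt4 (m : ℕ) (hm : 2 ≤ m) (F : Type) [Field F] (k : ℕ)
    (α : Fin k → ZMod m) (hα : ∀ i, α i ≠ 0) :
    let φ : Fin m → ZMod m := fun i => if (i : ℕ) = 0 then 0 else (((i : ℕ) - 1 : ℕ) : ZMod m)
    ((∃ a b : Fin k → Fin m,
        (∀ i, a i < b i) ∧
        (List.ofFn (fun i => Matrix.single (a i) (b i) (1 : F))).prod ≠ 0 ∧
        (∀ i, α i = φ (b i) - φ (a i))) ↔
      ∑ j ∈ Finset.Icc 1 (m - 1),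
          (Finset.univ.filter (fun i : Fin k => α i = (j : ZMod m))).card * j ≤ m - 2) := by
  intro φ
  haveI : NeZero m := ⟨by omega⟩
  have hval1 : ∀ i, 1 ≤ (α i).val := fun i =>
    Nat.pos_of_ne_zero (fun h => hα i ((ZMod.val_eq_zero (α i)).1 h))
  have hvallt : ∀ i, (α i).val < m := fun i => ZMod.val_lt _
  -- rewrite big sum
  have hsum : ∑ j ∈ Finset.Icc 1 (m - 1),
      (Finset.univ.filter (fun i : Fin k => α i = (j : ZMod m))).card * j
      = ∑ i : Fin k, (α i).val := by
    have hmaps : ∀ i ∈ (Finset.univ : Finset (Fin k)), (α i).val ∈ Finset.Icc 1 (m-1) := by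
      intro i _
      simp only [Finset.mem_Icc]
      exact ⟨hval1 i, by have := hvallt i; omega⟩
    calc ∑ j ∈ Finset.Icc 1 (m-1),
          (Finset.univ.filter (fun i : Fin k => α i = (j : ZMod m))).card * j
        = ∑ j ∈ Finset.Icc 1 (m-1),
            ∑ i ∈ Finset.univ.filter (fun i : Fin k => (α i).val = j), j := by
          refine Finset.sum_congr rfl fun j hj => ?_
          rw [Finset.sum_const, smul_eq_mul]
          congr 2
          refine Finset.filter_congr fun i _ => ?_
          simp only [Finset.mem_Icc] at hj
          constructor
          · intro h; rw [h, ZMod.val_cast_of_lt (by omega)]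
          · intro h; rw [← h]; simp [ZMod.natCast_val, ZMod.cast_id]
      _ = ∑ i : Fin k, (α i).val := by
          have := Finset.sum_fiberwise_of_maps_to' (g := fun i : Fin k => (α i).val)
            hmaps (fun j => j)
          simpa using this
  rw [hsum]
  constructor
  · -- forward
    rintro ⟨a, b, hab, hprod, hdeg⟩
    rcases Nat.eq_zero_or_pos k with hk | hk
    · subst hk; simp
    have hchain := prodChainAux F m k a b hprod
    -- value formula
    have hvf : ∀ i : Fin k, (α i).val = ((b i : ℕ) - 1) - ((a i : ℕ) - 1) := by
      intro i
      have habi : (a i : ℕ) < (b i : ℕ) := hab i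
      have hblt : (b i : ℕ) < m := (b i).isLt
      have hd := hdeg i
      simp only [φ] at hd
      by_cases ha0 : (a i : ℕ) = 0
      · rw [if_pos ha0, if_neg (by omega), sub_zero] at hd
        rw [hd, ZMod.val_cast_of_lt (by omega)]
        omega
      · rw [if_neg ha0, if_neg (by omega)] at hd
        rw [← Nat.cast_sub (by omega)] at hd
        rw [hd, ZMod.val_cast_of_lt (by omega)]
    -- telescoping
    set g : ℕ → ℤ := fun t =>
      if h : t < k then (((a ⟨t, h⟩ : ℕ) - 1 : ℕ) : ℤ)
      else (((b ⟨k-1, by omega⟩ : ℕ) - 1 : ℕ) : ℤ) with hg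
    set f : ℕ → ℕ := fun t => if h : t < k then (α ⟨t, h⟩).val else 0 with hf
    have hsum2 : ∑ i : Fin k, (α i).val = ∑ t ∈ Finset.range k, f t := by
      rw [← Fin.sum_univ_eq_sum_range]
      refine Finset.sum_congr rfl fun i _ => ?_
      simp only [hf, i.isLt, dif_pos, Fin.eta]
    have hstep : ∀ t ∈ Finset.range k, (f t : ℤ) = g (t+1) - g t := by
      intro t ht
      rw [Finset.mem_range] at ht
      have h1 : f t = (α ⟨t, ht⟩).val := dif_pos ht
      have h2 : g t = (((a ⟨t, ht⟩ : ℕ) - 1 : ℕ) : ℤ) := dif_pos ht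
      have h3 : g (t+1) = (((b ⟨t, ht⟩ : ℕ) - 1 : ℕ) : ℤ) := by
        by_cases h : t + 1 < k
        · have := hchain t ht h
          rw [hg]; simp only [dif_pos h]; rw [this]
        · have hkt : t = k - 1 := by omega
          subst hkt
          rw [hg]; simp only [dif_neg h]
      have h4 := hvf ⟨t, ht⟩
      have h5 : (a ⟨t, ht⟩ : ℕ) < (b ⟨t, ht⟩ : ℕ) := hab _
      rw [h1, h2, h3, h4]
      exact Nat.cast_sub (Nat.sub_le_sub_right (le_of_lt h5) 1)
    have htel : ∑ t ∈ Finset.range k, (f t : ℤ) = g k - g 0 := by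
      rw [Finset.sum_congr rfl hstep]
      exact Finset.sum_range_sub g k
    have hgk : g k = (((b ⟨k-1, by omega⟩ : ℕ) - 1 : ℕ) : ℤ) := dif_neg (by omega)
    have hg0 : (0 : ℤ) ≤ g 0 := by
      rw [hg]; simp only [dif_pos hk]; positivity
    have hbk : (b ⟨k-1, by omega⟩ : ℕ) < m := (b _).isLt
    have hcast : ((∑ t ∈ Finset.range k, f t : ℕ) : ℤ) = ∑ t ∈ Finset.range k, (f t : ℤ) :=
      Nat.cast_sum _ _
    rw [hsum2]
    have : ((∑ t ∈ Finset.range k, f t : ℕ) : ℤ) ≤ (m : ℤ) - 2 := by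
      rw [hcast, htel, hgk]
      have : (((b ⟨k-1, by omega⟩ : ℕ) - 1 : ℕ) : ℤ) ≤ (m : ℤ) - 2 := by omega
      omega
    omega
  · -- backward
    intro hle
    set v : ℕ → ℕ := fun t => if h : t < k then (α ⟨t, h⟩).val else 0 with hv
    set c : ℕ → ℕ := fun t => 1 + ∑ i ∈ Finset.range t, v i with hc
    have hS : ∑ i ∈ Finset.range k, v i = ∑ i : Fin k, (α i).val := by
      rw [← Fin.sum_univ_eq_sum_range]
      refine Finset.sum_congr rfl fun i _ => ?_
      simp only [hv, i.isLt, dif_pos, Fin.eta]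
    have hcb : ∀ t, c t ≤ m - 1 := by
      intro t
      have h1 : ∑ i ∈ Finset.range t, v i ≤ ∑ i ∈ Finset.range k, v i := by
        rcases le_total t k with h | h
        · exact Finset.sum_le_sum_of_subset (Finset.range_subset_range.2 h)
        · refine le_of_eq (Finset.sum_subset (Finset.range_subset_range.2 h) ?_).symm
          intro x _ hx
          rw [Finset.mem_range, not_lt] at hx
          exact dif_neg (by omega)
      have := hS ▸ h1
      simp only [hc]
      omega
    have hclt : ∀ t, c t < m := fun t => by have := hcb t; omega
    set cf : ℕ → Fin m := fun t => ⟨c t, hclt t⟩ with hcf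
    have hcsucc : ∀ t, c (t+1) = c t + v t := by
      intro t
      simp only [hc, Finset.sum_range_succ]
      ring
    have hvpos : ∀ t (h : t < k), 1 ≤ v t := by
      intro t h
      rw [hv]; simp only [dif_pos h]; exact hval1 _
    refine ⟨fun i => cf i, fun i => cf ((i : ℕ)+1), ?_, ?_, ?_⟩
    · intro i
      show cf (i : ℕ) < cf ((i : ℕ)+1)
      rw [Fin.lt_def]
      show c (i : ℕ) < c ((i : ℕ)+1)
      have := hcsucc (i : ℕ)
      have := hvpos (i : ℕ) i.isLt
      omega
    · match k, α, hα, hval1, hvpos with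
      | 0, _, _, _, _ =>
          simp only [List.ofFn_zero, List.prod_nil]
          exact one_ne_zero
      | k'+1, α, hα, hval1, hvpos =>
          rw [chainProdAux F m k' cf]
          intro h0
          have := congrFun (congrFun h0 (cf 0)) (cf (k'+1))
          simp [Matrix.single_apply_same] at this
    · intro i
      have hc1 : 1 ≤ c (i : ℕ) := by simp only [hc]; omega
      have hc2 : 1 ≤ c ((i : ℕ)+1) := by simp only [hc]; omega
      simp only [φ]
      rw [if_neg (show ((cf ((i:ℕ)+1) : Fin m) : ℕ) ≠ 0 from by
            show c ((i:ℕ)+1) ≠ 0; omega),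
          if_neg (show ((cf (i:ℕ) : Fin m) : ℕ) ≠ 0 from by
            show c (i:ℕ) ≠ 0; omega)]
      show α i = ((c ((i:ℕ)+1) - 1 : ℕ) : ZMod m) - ((c (i:ℕ) - 1 : ℕ) : ZMod m)
      have h1 : c ((i:ℕ)+1) - 1 = (c (i:ℕ) - 1) + (α i).val := by
        have := hcsucc (i : ℕ)
        have hvi : v (i : ℕ) = (α i).val := by
          rw [hv]; simp only [dif_pos i.isLt, Fin.eta]
        omega
      rw [h1, Nat.cast_add]
      simp [ZMod.natCast_val, ZMod.cast_id]
end

section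
/- In the algebra UT_m(F) of m×m upper-triangular matrices over a field F with an elementary Z_m-grading induced by any m-tuple of the form (0, 0, g_3, ..., g_m), for every homogeneous element z of nonzero degree and all elements y_1, y_2 of degree 0, one has z · (y_1 y_2 - y_2 y_1) = 0. -/
/-- For `UT_m(F)` with an elementary `ℤ_m`-grading induced by an `m`-tuple of the form
`(0,0,g₃,…,g_m)` with `g₃,…,g_m` pairwise distinct and nonzero, `z·[y₁,y₂] = 0` for every
homogeneous `z` of nonzero degree and all `y₁, y₂` of degree 0. -/
theorem stmt6 (m : ℕ) (hm : 2 ≤ m) (F : Type) [Field F] (g : Fin m → ZMod m)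
    (h0 : g ⟨0, by omega⟩ = 0) (h1 : g ⟨1, by omega⟩ = 0)
    (hinj : ∀ i j : Fin m, 2 ≤ (i : ℕ) → 2 ≤ (j : ℕ) → g i = g j → i = j)
    (hne : ∀ i : Fin m, 2 ≤ (i : ℕ) → g i ≠ 0) :
    let comp : ZMod m → Submodule F (Matrix (Fin m) (Fin m) F) := fun d =>
      Submodule.span F
        {A | ∃ i j : Fin m, i ≤ j ∧ g j - g i = d ∧ A = Matrix.single i j 1}
    ∀ d : ZMod m, d ≠ 0 → ∀ z ∈ comp d, ∀ y1 ∈ comp 0, ∀ y2 ∈ comp 0,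
      z * (y1 * y2 - y2 * y1) = 0 := by
  intro comp d hd z hz y1 hy1 y2 hy2
  set z0 : Fin m := ⟨0, by omega⟩ with hz0
  set z1 : Fin m := ⟨1, by omega⟩ with hz1
  have hz01 : z0 ≠ z1 := by
    intro h; exact absurd (congrArg Fin.val h) (by simp [hz0, hz1])
  -- z has zero first column
  have hA : ∀ k : Fin m, z k z0 = 0 := by
    have : ∀ w ∈ comp d, ∀ k : Fin m, w k z0 = 0 := by
      intro w hw
      refine Submodule.span_induction ?_ ?_ ?_ ?_ hw
      · rintro A ⟨i, j, hij, hdeg, rfl⟩ k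
        by_contra hne'
        have hki : i = k ∧ j = z0 := by
          by_contra hc
          exact hne' (by
            rw [Matrix.single]
            simp only [Matrix.of_apply]
            rw [if_neg hc])
        have hj0 : j = z0 := hki.2
        have : i = z0 := by
          have : i ≤ z0 := hj0 ▸ hij
          exact le_antisymm (by exact this) (by
            simp [hz0, Fin.le_def])
        apply hd
        rw [← hdeg, hj0, this, sub_self]
      · intro k; rfl
      · intro a b _ _ ha hb k; simp [Matrix.add_apply, ha k, hb k]
      · intro c a _ ha k; simp [Matrix.smul_apply, ha k]
    exact this z hz
  -- elements of comp 0 are diagonal plus a multiple of e_{01}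
  have hB : ∀ y ∈ comp 0, ∀ k l : Fin m, k ≠ l → ¬(k = z0 ∧ l = z1) → y k l = 0 := by
    intro y hy
    refine Submodule.span_induction ?_ ?_ ?_ ?_ hy
    · rintro A ⟨i, j, hij, hdeg, rfl⟩ k l hkl hnot
      by_contra hne'
      have hki : i = k ∧ j = l := by
        by_contra hc
        exact hne' (by
          rw [Matrix.single]
          simp only [Matrix.of_apply]
          rw [if_neg hc])
      obtain ⟨rfl, rfl⟩ := hki
      -- now i ≤ j, i ≠ j, g j = g i
      have hlt : (i : ℕ) < (j : ℕ) := lt_of_le_of_ne hij (by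
        intro h; exact hkl (Fin.ext h))
      have heq : g j = g i := by
        have := hdeg; rwa [sub_eq_zero] at this
      rcases Nat.lt_or_ge (i : ℕ) 2 with hk2 | hk2
      · rcases Nat.lt_or_ge (j : ℕ) 2 with hl2 | hl2
        · -- both < 2 : i = 0, j = 1
          apply hnot
          constructor
          · apply Fin.ext; simp [hz0]; omega
          · apply Fin.ext; simp [hz1]; omega
        · -- j ≥ 2, i < 2 : g i = 0, contradiction with g j ≠ 0
          have hk0 : g i = 0 := by
            interval_cases h : (i : ℕ)
            · have : i = z0 := Fin.ext (by simpa [hz0] using h)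
              rw [this]; exact h0
            · have : i = z1 := Fin.ext (by simpa [hz1] using h)
              rw [this]; exact h1
          exact hne j hl2 (heq.trans hk0)
      · -- i ≥ 2, j > i ≥ 2 : hinj gives i = j
        have hl2 : 2 ≤ (j : ℕ) := by omega
        exact hkl (hinj i j hk2 hl2 heq.symm)
    · intro k l _ _; rfl
    · intro a b _ _ ha hb k l h1' h2'
      simp [Matrix.add_apply, ha k l h1' h2', hb k l h1' h2']
    · intro c a _ ha k l h1' h2'
      simp [Matrix.smul_apply, ha k l h1' h2']
  have hB1 := hB y1 hy1
  have hB2 := hB y2 hy2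
  -- the commutator is supported at (z0, z1)
  set w := y1 * y2 - y2 * y1 with hw
  have hC : ∀ k l : Fin m, ¬(k = z0 ∧ l = z1) → w k l = 0 := by
    intro k l hnot
    rw [hw]
    simp only [Matrix.sub_apply, Matrix.mul_apply, ← Finset.sum_sub_distrib]
    apply Finset.sum_eq_zero
    intro a _
    rcases Decidable.em (k = l) with rfl | hkl
    · rcases Decidable.em (a = k) with hak | hak
      · rw [hak]; ring
      · have h1' : y1 k a * y2 a k = 0 := by
          rcases Decidable.em (k = z0 ∧ a = z1) with ⟨hk0, ha1⟩ | h
          · rw [hB2 a k hak (by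
              rintro ⟨h', _⟩; exact hz01 (h'.symm.trans ha1))]
            ring
          · rw [hB1 k a (fun h' => hak h'.symm) h]; ring
        have h2' : y2 k a * y1 a k = 0 := by
          rcases Decidable.em (k = z0 ∧ a = z1) with ⟨hk0, ha1⟩ | h
          · rw [hB1 a k hak (by
              rintro ⟨h', _⟩; exact hz01 (h'.symm.trans ha1))]
            ring
          · rw [hB2 k a (fun h' => hak h'.symm) h]; ring
        rw [h1', h2', sub_zero]
    · have key : ∀ u v : Matrix (Fin m) (Fin m) F,
          (∀ p q : Fin m, p ≠ q → ¬(p = z0 ∧ q = z1) → u p q = 0) →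
          (∀ p q : Fin m, p ≠ q → ¬(p = z0 ∧ q = z1) → v p q = 0) →
          u k a * v a l = 0 := by
        intro u v hu hv
        rcases Decidable.em (k = a) with hka | hka
        · rcases Decidable.em (a = l) with hal | hal
          · exact absurd (hka.trans hal) hkl
          · rw [hv a l hal (fun h => hnot ⟨hka.trans h.1, h.2⟩)]; ring
        · rcases Decidable.em (k = z0 ∧ a = z1) with ⟨hk0, ha1⟩ | h
          · rcases Decidable.em (a = l) with hal | hal
            · exact absurd ⟨hk0, hal.symm.trans ha1⟩ hnot
            · rw [hv a l hal (by
                rintro ⟨h', _⟩; exact hz01 (h'.symm.trans ha1))]; ring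
          · rw [hu k a hka h]; ring
      rw [key y1 y2 hB1 hB2, key y2 y1 hB2 hB1, sub_zero]
  -- conclude
  ext k l
  rw [Matrix.mul_apply, Matrix.zero_apply]
  apply Finset.sum_eq_zero
  intro a _
  rcases Decidable.em (a = z0 ∧ l = z1) with ⟨ha0, hl1⟩ | h
  · rw [ha0, hA k]; ring
  · rw [hC a l h]; ring
end

section
/- In the algebra UT_4(F) of 4×4 upper-triangular matrices over a field F, graded by Z_4 via the elementary grading induced by (0,0,1,2), the following are identities: for all homogeneous elements z of degree 1, t, t_1, t_2 of degree 2, and y_1,...,y_4 of degree 0: (a) (y_1 y_2 - y_2 y_1)(y_3 y_4 - y_4 y_3) = 0; (b) z·t = 0; (c) t_1·t_2 = 0; (d) the product of any three degree-1 elements z_1 z_2 z_3 = 0; (e) t·(y_1 y_2 - y_2 y_1) = 0. -/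
open Matrix

private lemma mem0' {F : Type} [Field F] {A : Matrix (Fin 4) (Fin 4) F}
    (h : A ∈ Submodule.span F {Matrix.single (0:Fin 4) (0:Fin 4) (1:F), Matrix.single 1 1 1,
      Matrix.single 2 2 1, Matrix.single 3 3 1, Matrix.single 0 1 1}) :
    A 0 2 = 0 ∧ A 0 3 = 0 ∧ A 1 0 = 0 ∧ A 1 2 = 0 ∧ A 1 3 = 0 ∧ A 2 0 = 0 ∧ A 2 1 = 0 ∧
      A 2 3 = 0 ∧ A 3 0 = 0 ∧ A 3 1 = 0 ∧ A 3 2 = 0 := by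
  induction h using Submodule.span_induction with
  | mem x hx =>
      simp only [Set.mem_insert_iff, Set.mem_singleton_iff] at hx
      rcases hx with rfl | rfl | rfl | rfl | rfl <;>
        norm_num [Matrix.single, Matrix.of_apply] <;> decide
  | zero => norm_num
  | add x y _ _ hx hy =>
      obtain ⟨a1,a2,a3,a4,a5,a6,a7,a8,a9,a10,a11⟩ := hx
      obtain ⟨b1,b2,b3,b4,b5,b6,b7,b8,b9,b10,b11⟩ := hy
      simp [Matrix.add_apply, *]
  | smul c x _ hx =>
      obtain ⟨a1,a2,a3,a4,a5,a6,a7,a8,a9,a10,a11⟩ := hx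
      simp [Matrix.smul_apply, *]

private lemma mem1' {F : Type} [Field F] {A : Matrix (Fin 4) (Fin 4) F}
    (h : A ∈ Submodule.span F {Matrix.single (0:Fin 4) (2:Fin 4) (1:F), Matrix.single 1 2 1,
      Matrix.single 2 3 1}) :
    A 0 0 = 0 ∧ A 0 1 = 0 ∧ A 0 3 = 0 ∧ A 1 0 = 0 ∧ A 1 1 = 0 ∧ A 1 3 = 0 ∧ A 2 0 = 0 ∧
      A 2 1 = 0 ∧ A 2 2 = 0 ∧ A 3 0 = 0 ∧ A 3 1 = 0 ∧ A 3 2 = 0 ∧ A 3 3 = 0 := by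
  induction h using Submodule.span_induction with
  | mem x hx =>
      simp only [Set.mem_insert_iff, Set.mem_singleton_iff] at hx
      rcases hx with rfl | rfl | rfl <;>
        norm_num [Matrix.single, Matrix.of_apply] <;> decide
  | zero => norm_num
  | add x y _ _ hx hy =>
      obtain ⟨a1,a2,a3,a4,a5,a6,a7,a8,a9,a10,a11,a12,a13⟩ := hx
      obtain ⟨b1,b2,b3,b4,b5,b6,b7,b8,b9,b10,b11,b12,b13⟩ := hy
      simp [Matrix.add_apply, *]
  | smul c x _ hx =>
      obtain ⟨a1,a2,a3,a4,a5,a6,a7,a8,a9,a10,a11,a12,a13⟩ := hx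
      simp [Matrix.smul_apply, *]

private lemma mem2' {F : Type} [Field F] {A : Matrix (Fin 4) (Fin 4) F}
    (h : A ∈ Submodule.span F {Matrix.single (0:Fin 4) (3:Fin 4) (1:F), Matrix.single 1 3 1}) :
    A 0 0 = 0 ∧ A 0 1 = 0 ∧ A 0 2 = 0 ∧ A 1 0 = 0 ∧ A 1 1 = 0 ∧ A 1 2 = 0 ∧ A 2 0 = 0 ∧
      A 2 1 = 0 ∧ A 2 2 = 0 ∧ A 2 3 = 0 ∧ A 3 0 = 0 ∧ A 3 1 = 0 ∧ A 3 2 = 0 ∧ A 3 3 = 0 := by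
  induction h using Submodule.span_induction with
  | mem x hx =>
      simp only [Set.mem_insert_iff, Set.mem_singleton_iff] at hx
      rcases hx with rfl | rfl <;>
        norm_num [Matrix.single, Matrix.of_apply] <;> decide
  | zero => norm_num
  | add x y _ _ hx hy =>
      obtain ⟨a1,a2,a3,a4,a5,a6,a7,a8,a9,a10,a11,a12,a13,a14⟩ := hx
      obtain ⟨b1,b2,b3,b4,b5,b6,b7,b8,b9,b10,b11,b12,b13,b14⟩ := hy
      simp [Matrix.add_apply, *]
  | smul c x _ hx =>
      obtain ⟨a1,a2,a3,a4,a5,a6,a7,a8,a9,a10,a11,a12,a13,a14⟩ := hx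
      simp [Matrix.smul_apply, *]

set_option maxHeartbeats 2000000 in
/-- In `UT_4(F)` with the elementary `ℤ_4`-grading induced by `(0,0,1,2)`:
degree-0 component is spanned by the diagonal units and `e12`, degree-1 by
`e13, e23, e34`, degree-2 by `e14, e24` (all written 0-based below). -/
theorem stmt7 (F : Type) [Field F] :
    let E : Fin 4 → Fin 4 → Matrix (Fin 4) (Fin 4) F := fun i j => Matrix.single i j 1
    let D0 : Submodule F (Matrix (Fin 4) (Fin 4) F) :=
      Submodule.span F {E 0 0, E 1 1, E 2 2, E 3 3, E 0 1}
    let D1 : Submodule F (Matrix (Fin 4) (Fin 4) F) := Submodule.span F {E 0 2, E 1 2, E 2 3}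
    let D2 : Submodule F (Matrix (Fin 4) (Fin 4) F) := Submodule.span F {E 0 3, E 1 3}
    (∀ y1 ∈ D0, ∀ y2 ∈ D0, ∀ y3 ∈ D0, ∀ y4 ∈ D0,
      (y1 * y2 - y2 * y1) * (y3 * y4 - y4 * y3) = 0) ∧
    (∀ z ∈ D1, ∀ t ∈ D2, z * t = 0) ∧
    (∀ t1 ∈ D2, ∀ t2 ∈ D2, t1 * t2 = 0) ∧
    (∀ z1 ∈ D1, ∀ z2 ∈ D1, ∀ z3 ∈ D1, z1 * z2 * z3 = 0) ∧
    (∀ t ∈ D2, ∀ y1 ∈ D0, ∀ y2 ∈ D0, t * (y1 * y2 - y2 * y1) = 0) := by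
  intro E D0 D1 D2
  refine ⟨?_, ?_, ?_, ?_, ?_⟩
  · intro y1 h1 y2 h2 y3 h3 y4 h4
    obtain ⟨a1,a2,a3,a4,a5,a6,a7,a8,a9,a10,a11⟩ := mem0' h1
    obtain ⟨b1,b2,b3,b4,b5,b6,b7,b8,b9,b10,b11⟩ := mem0' h2
    obtain ⟨c1,c2,c3,c4,c5,c6,c7,c8,c9,c10,c11⟩ := mem0' h3
    obtain ⟨d1,d2,d3,d4,d5,d6,d7,d8,d9,d10,d11⟩ := mem0' h4
    clear h1 h2 h3 h4
    ext i j
    fin_cases i <;> fin_cases j <;>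
      simp [Matrix.mul_apply, Fin.sum_univ_four, -mul_eq_zero, *] <;> ring
  · intro z hz t ht
    obtain ⟨a1,a2,a3,a4,a5,a6,a7,a8,a9,a10,a11,a12,a13⟩ := mem1' hz
    obtain ⟨b1,b2,b3,b4,b5,b6,b7,b8,b9,b10,b11,b12,b13,b14⟩ := mem2' ht
    clear hz ht
    ext i j
    fin_cases i <;> fin_cases j <;>
      simp [Matrix.mul_apply, Fin.sum_univ_four, -mul_eq_zero, *] <;> ring
  · intro t1 h1 t2 h2
    obtain ⟨a1,a2,a3,a4,a5,a6,a7,a8,a9,a10,a11,a12,a13,a14⟩ := mem2' h1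
    obtain ⟨b1,b2,b3,b4,b5,b6,b7,b8,b9,b10,b11,b12,b13,b14⟩ := mem2' h2
    clear h1 h2
    ext i j
    fin_cases i <;> fin_cases j <;>
      simp [Matrix.mul_apply, Fin.sum_univ_four, -mul_eq_zero, *] <;> ring
  · intro z1 h1 z2 h2 z3 h3
    obtain ⟨a1,a2,a3,a4,a5,a6,a7,a8,a9,a10,a11,a12,a13⟩ := mem1' h1
    obtain ⟨b1,b2,b3,b4,b5,b6,b7,b8,b9,b10,b11,b12,b13⟩ := mem1' h2
    obtain ⟨c1,c2,c3,c4,c5,c6,c7,c8,c9,c10,c11,c12,c13⟩ := mem1' h3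
    clear h1 h2 h3
    ext i j
    fin_cases i <;> fin_cases j <;>
      simp [Matrix.mul_apply, Fin.sum_univ_four, -mul_eq_zero, *] <;> ring
  · intro t ht y1 h1 y2 h2
    obtain ⟨a1,a2,a3,a4,a5,a6,a7,a8,a9,a10,a11,a12,a13,a14⟩ := mem2' ht
    obtain ⟨b1,b2,b3,b4,b5,b6,b7,b8,b9,b10,b11⟩ := mem0' h1
    obtain ⟨c1,c2,c3,c4,c5,c6,c7,c8,c9,c10,c11⟩ := mem0' h2
    clear ht h1 h2
    ext i j
    fin_cases i <;> fin_cases j <;>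
      simp [Matrix.mul_apply, Fin.sum_univ_four, -mul_eq_zero, *] <;> ring
end

section
/- Let F be a field of characteristic 0 and A any unital F-algebra. For any n ≥ 2, any elements z, y_1, ..., y_n ∈ A, and any permutation σ of {1,...,n}: [z, y_{σ(1)}, ..., y_{σ(n)}] - [z, y_1, ..., y_n] lies in the two-sided span of elements of the form [y_{i_1},...,y_{i_s}] · [z, y_{j_1},...,y_{j_t}] and [z, y_{j_1},...,y_{j_t}] · [y_{i_1},...,y_{i_s}] with s ≥ 2 and s + t ≤ n. Here [a,b] = ab - ba and [a_1,...,a_k] denotes the left-normed iterated commutator [[...[a_1,a_2],...],a_k]. -/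
/-- `comm a b = [a,b] = ab - ba`. -/
def comm9 {A : Type*} [Ring A] (a b : A) : A := a * b - b * a

/-- Left-normed iterated commutator `[a, l₁, l₂, …]`. -/
def lcomm9 {A : Type*} [Ring A] (a : A) (l : List A) : A := l.foldl comm9 a

section Aux

variable {A : Type*} [Ring A]

lemma lcomm9_nil (a : A) : lcomm9 a [] = a := rfl

lemma lcomm9_cons (a b : A) (l : List A) : lcomm9 a (b :: l) = lcomm9 (comm9 a b) l := rfl

lemma lcomm9_append (a : A) (l1 l2 : List A) :
    lcomm9 a (l1 ++ l2) = lcomm9 (lcomm9 a l1) l2 :=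
  List.foldl_append ..

lemma lcomm9_add (l : List A) : ∀ a b : A, lcomm9 (a + b) l = lcomm9 a l + lcomm9 b l := by
  induction l with
  | nil => intro a b; rfl
  | cons c l ih =>
    intro a b
    simp only [lcomm9_cons]
    rw [show comm9 (a + b) c = comm9 a c + comm9 b c by unfold comm9; noncomm_ring, ih]

lemma lcomm9_sub (l : List A) : ∀ a b : A, lcomm9 (a - b) l = lcomm9 a l - lcomm9 b l := by
  induction l with
  | nil => intro a b; rfl
  | cons c l ih =>
    intro a b
    simp only [lcomm9_cons]
    rw [show comm9 (a - b) c = comm9 a c - comm9 b c by unfold comm9; noncomm_ring, ih]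

variable {F : Type*} [Field F] [Module F A]

/-- Leibniz expansion: bracketing a product repeatedly lands in any submodule containing all
the split products. -/
lemma leib9 {n : ℕ} (y : Fin n → A) (M : Submodule F A) :
    ∀ (t : List (Fin n)) (u v : A),
      (∀ t1 t2 : List (Fin n), t1.length + t2.length ≤ t.length →
        lcomm9 u (t1.map y) * lcomm9 v (t2.map y) ∈ M) →
      lcomm9 (u * v) (t.map y) ∈ M := by
  intro t
  induction t with
  | nil =>
    intro u v h
    simpa [lcomm9_nil] using h [] [] (by simp)
  | cons r t ih =>
    intro u v h
    have e : comm9 (u * v) (y r) = u * comm9 v (y r) + comm9 u (y r) * v := by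
      unfold comm9; noncomm_ring
    simp only [List.map_cons, lcomm9_cons, e, lcomm9_add]
    refine add_mem ?_ ?_
    · refine ih u (comm9 v (y r)) fun t1 t2 hl => ?_
      simpa [lcomm9_cons] using h t1 (r :: t2) (by simp only [List.length_cons]; omega)
    · refine ih (comm9 u (y r)) v fun t1 t2 hl => ?_
      simpa [lcomm9_cons] using h (r :: t1) t2 (by simp only [List.length_cons]; omega)

/-- Main permutation lemma, by induction on `List.Perm`. -/
lemma perm9 {n : ℕ} (z : A) (y : Fin n → A) (M : Submodule F A)
    (hM : ∀ (a b : Fin n) (l1 l2 : List (Fin n)), 2 + l1.length + l2.length ≤ n →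
      lcomm9 (comm9 (y a) (y b)) (l1.map y) * lcomm9 z (l2.map y) ∈ M ∧
      lcomm9 z (l2.map y) * lcomm9 (comm9 (y a) (y b)) (l1.map y) ∈ M) :
    ∀ {l l' : List (Fin n)}, l.Perm l' → ∀ p : List (Fin n), p.length + l.length ≤ n →
      lcomm9 z ((p ++ l').map y) - lcomm9 z ((p ++ l).map y) ∈ M := by
  intro l l' h
  induction h with
  | nil => intro p hp; simpa using M.zero_mem
  | cons c hpl ih =>
    intro p hp
    have := ih (p ++ [c]) (by simp only [List.length_append, List.length_cons,
      List.length_singleton, List.length_nil] at hp ⊢; omega)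
    simpa [List.append_assoc] using this
  | swap a b l =>
    intro p hp
    set w := lcomm9 z (p.map y) with hw
    set c := comm9 (y a) (y b) with hc
    have key : lcomm9 z ((p ++ a :: b :: l).map y) - lcomm9 z ((p ++ b :: a :: l).map y)
        = lcomm9 (w * c) (l.map y) - lcomm9 (c * w) (l.map y) := by
      simp only [List.map_append, lcomm9_append, List.map_cons, lcomm9_cons, ← hw]
      rw [← lcomm9_sub, ← lcomm9_sub]
      congr 1
      unfold comm9 at hc ⊢
      rw [hc]; noncomm_ring
    rw [key]
    have hlen : p.length + l.length + 2 ≤ n := by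
      simp only [List.length_cons] at hp; omega
    refine sub_mem ?_ ?_
    · refine leib9 y M l w c fun t1 t2 ht => ?_
      have : lcomm9 w (t1.map y) = lcomm9 z ((p ++ t1).map y) := by
        simp [List.map_append, lcomm9_append, hw]
      rw [this]
      exact (hM a b t2 (p ++ t1) (by simp only [List.length_append]; omega)).2
    · refine leib9 y M l c w fun t1 t2 ht => ?_
      have : lcomm9 w (t2.map y) = lcomm9 z ((p ++ t2).map y) := by
        simp [List.map_append, lcomm9_append, hw]
      rw [this]
      exact (hM a b t1 (p ++ t2) (by simp only [List.length_append]; omega)).1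
  | trans h1 h2 ih1 ih2 =>
    intro p hp
    have e := h1.length_eq
    have m1 := ih1 p hp
    have m2 := ih2 p (by omega)
    simpa using add_mem m2 m1

end Aux

/-- Reordering the `y`-entries of a long left-normed commutator `[z, y₁, …, yₙ]` changes it
only by a linear combination of products (in either order) of a pure-`y` commutator of length
`s ≥ 2` with a `z`-leading commutator, of total degree `s + t ≤ n`. -/
theorem stmt9 (F A : Type) [Field F] [CharZero F] [Ring A] [Algebra F A]
    (n : ℕ) (hn : 2 ≤ n) (z : A) (y : Fin n → A) (σ : Equiv.Perm (Fin n)) :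
    lcomm9 z (List.ofFn (fun i => y (σ i))) - lcomm9 z (List.ofFn y) ∈
      Submodule.span F {x : A | ∃ (a b : Fin n) (l1 l2 : List (Fin n)),
        2 + l1.length + l2.length ≤ n ∧
        (x = lcomm9 (comm9 (y a) (y b)) (l1.map y) * lcomm9 z (l2.map y) ∨
         x = lcomm9 z (l2.map y) * lcomm9 (comm9 (y a) (y b)) (l1.map y))} := by
  set M := Submodule.span F {x : A | ∃ (a b : Fin n) (l1 l2 : List (Fin n)),
        2 + l1.length + l2.length ≤ n ∧
        (x = lcomm9 (comm9 (y a) (y b)) (l1.map y) * lcomm9 z (l2.map y) ∨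
         x = lcomm9 z (l2.map y) * lcomm9 (comm9 (y a) (y b)) (l1.map y))} with hMdef
  have hM : ∀ (a b : Fin n) (l1 l2 : List (Fin n)), 2 + l1.length + l2.length ≤ n →
      lcomm9 (comm9 (y a) (y b)) (l1.map y) * lcomm9 z (l2.map y) ∈ M ∧
      lcomm9 z (l2.map y) * lcomm9 (comm9 (y a) (y b)) (l1.map y) ∈ M := by
    intro a b l1 l2 h
    constructor
    · exact Submodule.subset_span ⟨a, b, l1, l2, h, Or.inl rfl⟩
    · exact Submodule.subset_span ⟨a, b, l1, l2, h, Or.inr rfl⟩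
  have hperm : (List.finRange n).Perm (List.ofFn (σ : Fin n → Fin n)) := by
    refine List.perm_of_nodup_nodup_toFinset_eq (List.nodup_finRange n)
      (List.nodup_ofFn.mpr σ.injective) ?_
    ext x
    simp [List.mem_ofFn]
    exact σ.surjective x
  have main := perm9 z y M hM hperm [] (by simp)
  have e1 : List.ofFn (fun i => y (σ i)) = (List.ofFn (σ : Fin n → Fin n)).map y := by
    rw [List.map_ofFn]; rfl
  have e2 : List.ofFn y = (List.finRange n).map y := List.ofFn_eq_map
  rw [e1, e2]
  simpa using main
end
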